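/- Let λ ≠ 0, μ real, η ∈ ℝ² nonzero, η* = θη, and v(u) = (-u/(λ² + (μ-u)²))(λη - (μ-u)η*). Then for every real u, |v(u) + η*|² = ((λ² + μ²)/(λ² + (μ-u)²))·|η|². -/

import Mathlib

noncomputable section
open Real Matrix

def toV (x : Fin 2 → ℝ) : EuclideanSpace ℝ (Fin 2) := WithLp.toLp 2 x

def th : Matrix (Fin 2) (Fin 2) ℝ := !![0, -1; 1, 0]

lemma normsq_aux (x : Fin 2 → ℝ) : ‖toV x‖ ^ 2 = x 0 ^ 2 + x 1 ^ 2 := by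
  rw [toV, EuclideanSpace.norm_eq, Fin.sum_univ_two, Real.norm_eq_abs, Real.norm_eq_abs, Real.sq_sqrt (by positivity), sq_abs, sq_abs, WithLp.ofLp_toLp]

/-- For `λ ≠ 0`, `η ≠ 0`, `η* = θη` and
`v(u) = (-u/(λ² + (μ-u)²))(λη - (μ-u)η*)`, one has
`|v(u) + η*|² = ((λ² + μ²)/(λ² + (μ-u)²))|η|²` for every real `u`. -/
theorem stmt7 (lam mu : ℝ) (hlam : lam ≠ 0) (eta : Fin 2 → ℝ) (heta : eta ≠ 0)
    (etaStar : Fin 2 → ℝ) (hetaStar : etaStar = th.mulVec eta)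
    (v : ℝ → Fin 2 → ℝ)
    (hv : ∀ u, v u = (-u / (lam ^ 2 + (mu - u) ^ 2)) •
      (lam • eta - (mu - u) • etaStar)) :
    ∀ u : ℝ, ‖toV (v u + etaStar)‖ ^ 2 =
      ((lam ^ 2 + mu ^ 2) / (lam ^ 2 + (mu - u) ^ 2)) * ‖toV eta‖ ^ 2 := by
  intro u
  have hd : lam ^ 2 + (mu - u) ^ 2 > 0 := by positivity
  rw [normsq_aux, normsq_aux]
  simp only [hv, hetaStar, th, Pi.add_apply, Pi.smul_apply, Pi.sub_apply,
    Matrix.mulVec, Matrix.cons_val_zero, Matrix.cons_val_one, Matrix.head_cons,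
    smul_eq_mul, dotProduct, Fin.sum_univ_two, Matrix.cons_val',
    Matrix.empty_val', Matrix.cons_val_fin_one, Matrix.head_fin_const, Matrix.of_apply]
  field_simp
  ring
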